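/- arXiv:2603.23716 — 7 statements merged into one kernel-verified Lean document; each statement's English description precedes it below -/
import Mathlib

section
/- Let A, B, C be real numbers with 0 < A < B < C and let x ≥ 0. With Tr_x = A + C + x, Δ_x = Tr_x² − 4·A·C·(1 + x/B), and A_x = (Tr_x − √Δ_x)/2, B_x = B + x (√ the real square root), one has A_x < B_x. -/
/-- For 0 < A < B < C, x ≥ 0, Tr_x = A+C+x, Δ_x = Tr_x² − 4AC(1+x/B),
A_x = (Tr_x − √Δ_x)/2 and B_x = B + x, one has A_x < B_x. -/
theorem galois_top_Ax_lt_Bx (A B C x : ℝ)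
    (hA : 0 < A) (hAB : A < B) (hBC : B < C) (hx : 0 ≤ x) :
    ((A + C + x) - Real.sqrt ((A + C + x) ^ 2 - 4 * A * C * (1 + x / B))) / 2
      < B + x := by
  have hB : 0 < B := hA.trans hAB
  have hBx : 0 < B + x := by linarith
  have hprod : 0 < (B - A) * (C - B) * (B + x) := by
    apply mul_pos (mul_pos (by linarith) (by linarith)) hBx
  have hkey : (A + C + x - 2 * (B + x)) ^ 2
      < (A + C + x) ^ 2 - 4 * A * C * (1 + x / B) := by
    have hdiff : (A + C + x) ^ 2 - 4 * A * C * (1 + x / B)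
        - (A + C + x - 2 * (B + x)) ^ 2 = 4 * ((B - A) * (C - B) * (B + x)) / B := by
      field_simp
      ring
    have := div_pos (by linarith : (0:ℝ) < 4 * ((B - A) * (C - B) * (B + x))) hB
    linarith
  have habs : |A + C + x - 2 * (B + x)|
      < Real.sqrt ((A + C + x) ^ 2 - 4 * A * C * (1 + x / B)) := by
    rw [← Real.sqrt_sq_eq_abs]
    exact Real.sqrt_lt_sqrt (sq_nonneg _) hkey
  have := le_abs_self (A + C + x - 2 * (B + x))
  linarith
end

section
/- Let A, B, C be real numbers with 0 < A < B < C and let x ≥ 0. With Tr_x = A + C + x, Δ_x = Tr_x² − 4·A·C·(1 + x/B), B_x = B + x, and C_x = (Tr_x + √Δ_x)/2 (√ the real square root), one has B_x < C_x. -/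
/-- For 0 < A < B < C, x ≥ 0, Tr_x = A+C+x, Δ_x = Tr_x² − 4AC(1+x/B),
B_x = B + x and C_x = (Tr_x + √Δ_x)/2, one has B_x < C_x. -/
theorem galois_top_Bx_lt_Cx (A B C x : ℝ)
    (hA : 0 < A) (hAB : A < B) (hBC : B < C) (hx : 0 ≤ x) :
    B + x
      < ((A + C + x) + Real.sqrt ((A + C + x) ^ 2 - 4 * A * C * (1 + x / B))) / 2 := by
  have hB : 0 < B := hA.trans hAB
  have hkey : (2 * (B + x) - (A + C + x)) ^ 2
      < (A + C + x) ^ 2 - 4 * A * C * (1 + x / B) := by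
    have h1 : ((A + C + x) ^ 2 - 4 * A * C * (1 + x / B))
        - (2 * (B + x) - (A + C + x)) ^ 2
        = 4 * ((B - A) * (C - B) * (1 + x / B)) := by
      field_simp
      ring
    have h3 : 0 < 1 + x / B := by positivity
    have h4 : 0 < (B - A) * (C - B) * (1 + x / B) :=
      mul_pos (mul_pos (sub_pos.mpr hAB) (sub_pos.mpr hBC)) h3
    linarith
  have hs : 2 * (B + x) - (A + C + x)
      < Real.sqrt ((A + C + x) ^ 2 - 4 * A * C * (1 + x / B)) := by
    rcases le_or_gt (2 * (B + x) - (A + C + x)) 0 with h | h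
    · have := Real.sqrt_pos.mpr (lt_of_le_of_lt (sq_nonneg _) hkey)
      linarith
    · exact (Real.lt_sqrt h.le).mpr hkey
  linarith
end

section
/- Let 𝕄 = {(A, B, C) ∈ ℝ³ : 0 < A < B < C}. For every (A, B, C) ∈ 𝕄 and every x ≥ 0, the image j(x)(A, B, C) = (A_x, B_x, C_x), where A_x = (Tr_x − √Δ_x)/2, B_x = B + x, C_x = (Tr_x + √Δ_x)/2 with Tr_x = A + C + x and Δ_x = Tr_x² − 4·A·C·(1 + x/B), again lies in 𝕄; that is, 0 < A_x < B_x < C_x. Moreover, this fails for x < 0 in general, i.e., x ≥ 0 is exactly the condition under which j(x) maps 𝕄 into 𝕄 with real eigenvalues given by the real square root. -/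
/-- The set 𝕄 of ordered triples of principal moments of inertia. -/
def Mset : Set (ℝ × ℝ × ℝ) := {m | 0 < m.1 ∧ m.1 < m.2.1 ∧ m.2.1 < m.2.2}

/-- The Galois-axis inertia map j(x), using the real square root. -/
noncomputable def jmap (x : ℝ) (m : ℝ × ℝ × ℝ) : ℝ × ℝ × ℝ :=
  (((m.1 + m.2.2 + x)
      - Real.sqrt ((m.1 + m.2.2 + x) ^ 2 - 4 * m.1 * m.2.2 * (1 + x / m.2.1))) / 2,
   m.2.1 + x,
   ((m.1 + m.2.2 + x)
      + Real.sqrt ((m.1 + m.2.2 + x) ^ 2 - 4 * m.1 * m.2.2 * (1 + x / m.2.1))) / 2)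

/-- For each real x, j(x) maps 𝕄 into 𝕄 if and only if x ≥ 0;
in particular for x ≥ 0 and (A,B,C) ∈ 𝕄 one has 0 < A_x < B_x < C_x. -/
theorem galois_top_jmap_into_Mset_iff (x : ℝ) :
    (∀ m ∈ Mset, jmap x m ∈ Mset) ↔ 0 ≤ x := by
  constructor
  · intro h
    by_contra hx
    push_neg at hx
    have hm : ((-x/4, -x/2, -x) : ℝ × ℝ × ℝ) ∈ Mset :=
      ⟨by linarith, by linarith, by linarith⟩
    obtain ⟨h1, h2, _⟩ := h _ hm
    simp only [jmap] at h1 h2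
    have hs : (0:ℝ) ≤ Real.sqrt ((-x/4 + -x + x) ^ 2 - 4 * (-x/4) * (-x) * (1 + x / (-x/2))) :=
      Real.sqrt_nonneg _
    -- h2 : jmap's first coord < second coord = -x/2 + x = x/2 < 0, but h1 : 0 < first coord
    linarith
  · intro hx m hm
    obtain ⟨hA, hAB, hBC⟩ := hm
    set A := m.1
    set B := m.2.1
    set C := m.2.2
    have hB : 0 < B := lt_trans hA hAB
    have hC : 0 < C := lt_trans hB hBC
    set Tr : ℝ := A + C + x with hTrdef
    set Δ : ℝ := Tr ^ 2 - 4 * A * C * (1 + x / B) with hΔdef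
    have hTr : 0 < Tr := by positivity
    -- key identity: Δ = (2(B+x) - Tr)² - 4·q(B+x) with q(B+x) = (B+x)(B-A)(B-C)/B < 0
    have hkey : Δ = (2 * (B + x) - Tr) ^ 2 - 4 * ((B + x) * (B - A) * (B - C) / B) := by
      rw [hΔdef, hTrdef]
      field_simp
      ring
    have hq : (B + x) * (B - A) * (B - C) / B < 0 := by
      apply div_neg_of_neg_of_pos _ hB
      apply mul_neg_of_pos_of_neg
      · have : 0 < B + x := by linarith
        have : 0 < B - A := by linarith
        positivity
      · linarith
    set s : ℝ := Real.sqrt Δ with hsdef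
    have h1 : 2 * (B + x) - Tr < s :=
      Real.lt_sqrt_of_sq_lt (by rw [hkey]; linarith)
    have h2 : -(2 * (B + x) - Tr) < s :=
      Real.lt_sqrt_of_sq_lt (by rw [hkey]; nlinarith)
    have h0 : s < Tr := by
      rw [hsdef, Real.sqrt_lt' hTr, hΔdef]
      have hxB : 0 ≤ x / B := div_nonneg hx hB.le
      have : 0 < 4 * A * C * (1 + x / B) := by positivity
      linarith
    refine ⟨?_, ?_, ?_⟩ <;> simp only [jmap] <;> [skip; skip; skip]
    · show 0 < (Tr - s) / 2
      linarith
    · show (Tr - s) / 2 < B + x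
      linarith
    · show B + x < (Tr + s) / 2
      linarith
end

section
/- Let A, B, C be real numbers with 0 < A < B < C and let x, y ≥ 0. Write (A_y, B_y, C_y) = j(y)(A, B, C). Then the discriminant Δ computed at parameter x from the triple (A_y, B_y, C_y) equals the discriminant at parameter x + y computed from (A, B, C); explicitly, (A_y + C_y + x)² − 4·A_y·C_y·(1 + x/B_y) = (A + C + x + y)² − 4·A·C·(1 + (x + y)/B). -/
/-- The discriminant at parameter x computed from (A_y, B_y, C_y) = j(y)(A,B,C)
equals the discriminant at parameter x + y computed from (A, B, C). -/
theorem galois_top_disc_additive (A B C x y : ℝ)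
    (hA : 0 < A) (hAB : A < B) (hBC : B < C) (hx : 0 ≤ x) (hy : 0 ≤ y)
    (Ay By Cy : ℝ)
    (hAy : Ay = ((A + C + y) - Real.sqrt ((A + C + y) ^ 2 - 4 * A * C * (1 + y / B))) / 2)
    (hBy : By = B + y)
    (hCy : Cy = ((A + C + y) + Real.sqrt ((A + C + y) ^ 2 - 4 * A * C * (1 + y / B))) / 2) :
    (Ay + Cy + x) ^ 2 - 4 * Ay * Cy * (1 + x / By)
      = (A + C + (x + y)) ^ 2 - 4 * A * C * (1 + (x + y) / B) := by
  have hB : 0 < B := hA.trans hAB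
  have hBy0 : 0 < B + y := by linarith
  have hyB : y / B * B = y := div_mul_cancel₀ y hB.ne'
  have hD : 0 ≤ (A + C + y) ^ 2 - 4 * A * C * (1 + y / B) := by
    have key : B ^ 2 * ((A + C + y) ^ 2 - 4 * A * C * (1 + y / B))
        = (B * y + B * (A + C) - 2 * A * C) ^ 2 + 4 * A * C * (C - B) * (B - A) := by
      field_simp
      ring
    nlinarith [sq_nonneg (B * y + B * (A + C) - 2 * A * C),
      mul_pos (mul_pos (mul_pos hA (hA.trans (hAB.trans hBC))) (by linarith : (0:ℝ) < C - B)) (by linarith : (0:ℝ) < B - A),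
      sq_nonneg B, mul_pos hB hB]
  have hs : Real.sqrt ((A + C + y) ^ 2 - 4 * A * C * (1 + y / B)) ^ 2
      = (A + C + y) ^ 2 - 4 * A * C * (1 + y / B) := Real.sq_sqrt hD
  subst hAy hBy hCy
  set s := Real.sqrt ((A + C + y) ^ 2 - 4 * A * C * (1 + y / B)) with hsdef
  have key : s ^ 2 * B = ((A + C + y) ^ 2 - 4 * A * C) * B - 4 * A * C * y := by
    rw [hs]; field_simp; ring
  field_simp
  linear_combination (4 * (B + y + x)) * key
end

section
/- (Semigroup law for the Galois-axis inertia maps.) Let 𝕄 = {(A, B, C) ∈ ℝ³ : 0 < A < B < C}. For all x, y ≥ 0 and all (A, B, C) ∈ 𝕄, j(x)(j(y)(A, B, C)) = j(x + y)(A, B, C). Consequently, the set G_s = {j(x) : x ≥ 0} of self-maps of 𝕄 is an abelian (commutative) semigroup under composition, with neutral element j(0). -/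
lemma jmap_comp (x y A B C : ℝ) (hx : 0 ≤ x) (hy : 0 ≤ y)
    (hA : 0 < A) (hAB : A < B) (hBC : B < C) :
    jmap x (jmap y (A, B, C)) = jmap (x + y) (A, B, C) := by
  have hB : 0 < B := hA.trans hAB
  have hBy : 0 < B + y := by linarith
  have hΔeq : (A + C + y) ^ 2 - 4 * A * C * (1 + y / B)
      = ((B*y + B*(A+C) - 2*A*C)^2 + 4*A*C*(C-B)*(B-A)) / B^2 := by
    field_simp
    ring
  have hΔ : 0 ≤ (A + C + y) ^ 2 - 4 * A * C * (1 + y / B) := by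
    rw [hΔeq]
    apply div_nonneg _ (by positivity)
    nlinarith [sq_nonneg (B*y + B*(A+C) - 2*A*C), mul_pos (mul_pos (mul_pos hA (hA.trans (hAB.trans hBC))) (sub_pos.2 hBC)) (sub_pos.2 hAB)]
  set D := Real.sqrt ((A + C + y) ^ 2 - 4 * A * C * (1 + y / B)) with hDdef
  have hD2 : D ^ 2 = (A + C + y) ^ 2 - 4 * A * C * (1 + y / B) := Real.sq_sqrt hΔ
  have harg : ((A+C+y-D)/2 + (A+C+y+D)/2 + x) ^ 2
      - 4 * ((A+C+y-D)/2) * ((A+C+y+D)/2) * (1 + x / (B + y))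
      = (A + C + (x+y)) ^ 2 - 4 * A * C * (1 + (x+y) / B) := by
    have hD2' : B * D ^ 2 = (A+C+y)^2 * B - 4*A*C*(B+y) := by
      rw [hD2]; field_simp
    field_simp
    linear_combination (4*(B+y+x)) * hD2'
  simp only [jmap]
  refine Prod.ext ?_ (Prod.ext ?_ ?_) <;> simp only
  · rw [harg]; ring
  · ring
  · rw [harg]; ring

/-- Semigroup law j(x) ∘ j(y) = j(x+y) on 𝕄 for x, y ≥ 0; consequently the
maps j(x), x ≥ 0, form an abelian semigroup under composition with neutral element j(0). -/
theorem galois_top_semigroup_law :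
    (∀ x y : ℝ, 0 ≤ x → 0 ≤ y → ∀ m ∈ Mset, jmap x (jmap y m) = jmap (x + y) m) ∧
    (∀ x y : ℝ, 0 ≤ x → 0 ≤ y → ∀ m ∈ Mset, jmap x (jmap y m) = jmap y (jmap x m)) ∧
    (∀ m ∈ Mset, jmap 0 m = m) := by
  have key : ∀ x y : ℝ, 0 ≤ x → 0 ≤ y → ∀ m ∈ Mset, jmap x (jmap y m) = jmap (x + y) m := by
    rintro x y hx hy ⟨A, B, C⟩ ⟨hA, hAB, hBC⟩
    exact jmap_comp x y A B C hx hy hA hAB hBC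
  refine ⟨key, fun x y hx hy m hm => by rw [key x y hx hy m hm, key y x hy hx m hm, add_comm], ?_⟩
  rintro ⟨A, B, C⟩ ⟨hA, hAB, hBC⟩
  have hB : 0 < B := hA.trans hAB
  have h1 : (A + C + 0) ^ 2 - 4 * A * C * (1 + 0 / B) = (C - A) ^ 2 := by
    field_simp; ring
  simp only [jmap, h1, Real.sqrt_sq (by linarith : (0:ℝ) ≤ C - A)]
  refine Prod.ext ?_ (Prod.ext ?_ ?_) <;> simp <;> ring
end

section
/- Let 𝕄 = {(A, B, C) ∈ ℝ³ : 0 < A < B < C}. For all x, y ≥ 0 and all (A, B, C) ∈ 𝕄, the Galois-axis inertia maps commute: j(x)(j(y)(A, B, C)) = j(y)(j(x)(A, B, C)). -/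
/-- The discriminant is nonnegative for 0 < A < B < C and any real s. -/
lemma jmap_disc_nonneg (A B C s : ℝ) (hA : 0 < A) (hAB : A < B) (hBC : B < C) :
    0 ≤ (A + C + s) ^ 2 - 4 * A * C * (1 + s / B) := by
  have hB : 0 < B := hA.trans hAB
  have hBne : B ≠ 0 := ne_of_gt hB
  have h : (A + C + s) ^ 2 - 4 * A * C * (1 + s / B)
      = ((s * B + (A + C) * B - 2 * A * C) ^ 2 + 4 * A * C * (C - B) * (B - A)) / B ^ 2 := by
    field_simp
    ring
  rw [h]
  apply div_nonneg _ (by positivity)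
  have hC : 0 < C := hB.trans hBC
  nlinarith [sq_nonneg (s * B + (A + C) * B - 2 * A * C),
    mul_pos (mul_pos (mul_pos hA hC) (sub_pos.2 hBC)) (sub_pos.2 hAB)]

/-- Explicit symmetric form of the composition. -/
lemma jmap_jmap (A B C x y : ℝ) (hA : 0 < A) (hAB : A < B) (hBC : B < C)
    (hy : 0 ≤ y) :
    jmap x (jmap y (A, B, C)) =
      ((A + C + (x + y)
          - Real.sqrt ((A + C + (x + y)) ^ 2 - 4 * A * C * (1 + (x + y) / B))) / 2,
       B + (x + y),
       (A + C + (x + y)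
          + Real.sqrt ((A + C + (x + y)) ^ 2 - 4 * A * C * (1 + (x + y) / B))) / 2) := by
  have hB : 0 < B := hA.trans hAB
  have hBne : B ≠ 0 := ne_of_gt hB
  have hByne : B + y ≠ 0 := by positivity
  have hE : 0 ≤ (A + C + y) ^ 2 - 4 * A * C * (1 + y / B) :=
    jmap_disc_nonneg A B C y hA hAB hBC
  have hs2 : Real.sqrt ((A + C + y) ^ 2 - 4 * A * C * (1 + y / B)) ^ 2
      = (A + C + y) ^ 2 - 4 * A * C * (1 + y / B) := Real.sq_sqrt hE
  simp only [jmap]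
  set s := Real.sqrt ((A + C + y) ^ 2 - 4 * A * C * (1 + y / B)) with hsdef
  have hinner : ((A + C + y - s) / 2 + ((A + C + y + s) / 2) + x) ^ 2
      - 4 * ((A + C + y - s) / 2) * ((A + C + y + s) / 2) * (1 + x / (B + y))
      = (A + C + (x + y)) ^ 2 - 4 * A * C * (1 + (x + y) / B) := by
    have h1 : ((A + C + y - s) / 2 + ((A + C + y + s) / 2) + x) ^ 2
        - 4 * ((A + C + y - s) / 2) * ((A + C + y + s) / 2) * (1 + x / (B + y))
        = (A + C + y + x) ^ 2 - 4 * A * C * (1 + y / B) * (1 + x / (B + y)) := by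
      linear_combination (1 + x / (B + y)) * hs2
    have h2 : (A + C + y + x) ^ 2 - 4 * A * C * (1 + y / B) * (1 + x / (B + y))
        = (A + C + (x + y)) ^ 2 - 4 * A * C * (1 + (x + y) / B) := by
      field_simp
      ring
    exact h1.trans h2
  refine Prod.ext ?_ (Prod.ext ?_ ?_)
  · simp only
    rw [hinner]
    ring
  · simp only
    ring
  · simp only
    rw [hinner]
    ring

/-- The Galois-axis inertia maps commute on 𝕄 for x, y ≥ 0. -/
theorem galois_top_jmaps_commute (x y : ℝ) (hx : 0 ≤ x) (hy : 0 ≤ y)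
    (m : ℝ × ℝ × ℝ) (hm : m ∈ Mset) :
    jmap x (jmap y m) = jmap y (jmap x m) := by
  obtain ⟨A, B, C⟩ := m
  simp only [Mset, Set.mem_setOf_eq] at hm
  obtain ⟨hA, hAB, hBC⟩ := hm
  rw [jmap_jmap A B C x y hA hAB hBC hy, jmap_jmap A B C y x hA hAB hBC hx,
    add_comm y x]
end

section
/- (Group law of the complex inertia maps, stated via symmetric functions of the eigenvalue pair.) Let A, B, C, x, y ∈ ℂ with B ≠ 0 and B + y ≠ 0, and suppose A', C' ∈ ℂ satisfy A' + C' = A + C + y and A'·C' = A·C·(1 + y/B) (i.e., {A', C'} is the unordered eigenvalue pair produced by the complex inertia map with parameter y, and the middle eigenvalue is B' = B + y). Then A' + C' + x = A + C + (x + y) and A'·C'·(1 + x/B') = A·C·(1 + (x + y)/B); that is, applying the parameter x to (A', B', C') produces exactly the trace and determinant data of applying the parameter x + y to (A, B, C), so the 2-valued complex maps j̄(x) satisfy j̄(x) ∘ j̄(y) = j̄(x + y). -/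
/-- Group law of the complex inertia maps, stated via the symmetric
functions (sum and product) of the unordered eigenvalue pair: applying parameter x to
(A', B + y, C') produces the trace/determinant data of applying x + y to (A, B, C),
so j̄(x) ∘ j̄(y) = j̄(x + y). -/
theorem galois_top_complex_group_law (A B C x y A' C' : ℂ)
    (hB : B ≠ 0) (hBy : B + y ≠ 0)
    (hsum : A' + C' = A + C + y)
    (hprod : A' * C' = A * C * (1 + y / B)) :
    A' + C' + x = A + C + (x + y) ∧
    A' * C' * (1 + x / (B + y)) = A * C * (1 + (x + y) / B) := by
  constructor
  · rw [hsum]; ring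
  · rw [hprod]; field_simp; ring
end
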